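/- arXiv:2402.00855 — 9 statements merged into one kernel-verified Lean document; each statement's English description precedes it below -/
import Mathlib

section
/- For every participant i = 1, …, n and every outcome ω, the payout satisfies W_i(ω) ≥ S(0) · (1+R) · f_i · I_i(ω), where S(0) = (Σ_{j=1}^{n+1} π_j) / (Σ_{j=1}^{n} f_j) is the time-0 value of a tontine share; that is, a surviving participant always receives at least the accumulated time-1 value of his allocated tontine shares. -/
open MeasureTheory Finset

/-- Every participant's payout is at least the accumulated time-1 value of his allocated
tontine shares: `W_i(ω) ≥ S(0) · (1+R) · f_i · I_i(ω)`,
where `S(0) = (Σ_{j=1}^{n+1} π_j) / (Σ_{j=1}^{n} f_j)`. -/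
theorem tontine_payout_ge_share_value
    {Ω : Type*} [MeasurableSpace Ω] (P : Measure Ω) [IsProbabilityMeasure P]
    (n : ℕ) (hn : 1 ≤ n)
    (I : Fin n → Ω → ℝ) (hI01 : ∀ j ω, I j ω = 0 ∨ I j ω = 1)
    (hImeas : ∀ j, Measurable (I j))
    (Iadm : Ω → ℝ) (hIadm : ∀ ω, Iadm ω = ∏ j, (1 - I j ω))
    (hadm0 : 0 < P {ω | Iadm ω = 1}) (hadm1 : P {ω | Iadm ω = 1} < 1)
    (π : Fin n → ℝ) (hπ : ∀ j, 0 < π j) (πadm : ℝ) (hπadm : 0 ≤ πadm)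
    (f : Fin n → ℝ) (hf : ∀ j, 0 < f j) (fadm : ℝ) (hfadm : 0 < fadm)
    (R : ℝ) (hR : 0 ≤ R)
    (W : Fin n → Ω → ℝ)
    (hW : ∀ i ω, W i ω =
      (1 + R) * ((∑ j, π j) + πadm) * (f i * I i ω) /
        ((∑ j, f j * I j ω) + fadm * Iadm ω))
    (S0 : ℝ) (hS0 : S0 = ((∑ j, π j) + πadm) / (∑ j, f j)) :
    ∀ (i : Fin n) (ω : Ω), W i ω ≥ S0 * (1 + R) * f i * I i ω := by
  intro i ω
  rcases hI01 i ω with h0 | h1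
  · rw [hW, h0]
    simp
  · -- I i ω = 1, so Iadm ω = 0
    have hIadm0 : Iadm ω = 0 := by
      rw [hIadm]
      exact Finset.prod_eq_zero (Finset.mem_univ i) (by rw [h1]; ring)
    have hπsum : 0 < (∑ j, π j) + πadm := by
      have : 0 < ∑ j, π j :=
        Finset.sum_pos (fun j _ => hπ j) ⟨i, Finset.mem_univ i⟩
      linarith
    have hfsum : 0 < ∑ j, f j :=
      Finset.sum_pos (fun j _ => hf j) ⟨i, Finset.mem_univ i⟩
    have hDle : (∑ j, f j * I j ω) + fadm * Iadm ω ≤ ∑ j, f j := by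
      rw [hIadm0, mul_zero, add_zero]
      apply Finset.sum_le_sum
      intro j _
      rcases hI01 j ω with h | h
      · rw [h, mul_zero]; exact (hf j).le
      · rw [h, mul_one]
    have hDpos : 0 < (∑ j, f j * I j ω) + fadm * Iadm ω := by
      rw [hIadm0, mul_zero, add_zero]
      have h1' : f i * I i ω = f i := by rw [h1, mul_one]
      calc (0:ℝ) < f i := hf i
        _ = f i * I i ω := h1'.symm
        _ ≤ ∑ j, f j * I j ω := by
            apply Finset.single_le_sum (f := fun j => f j * I j ω) _ (Finset.mem_univ i)
            intro j _
            rcases hI01 j ω with h | h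
            · rw [h, mul_zero]
            · rw [h, mul_one]; exact (hf j).le
    rw [hW, hS0, h1, mul_one, mul_one]
    rw [ge_iff_le, div_mul_eq_mul_div, div_mul_eq_mul_div,
      div_le_div_iff₀ hfsum hDpos]
    have hnum : 0 ≤ ((∑ j, π j) + πadm) * (1 + R) * f i := by
      exact mul_nonneg (mul_nonneg hπsum.le (by linarith)) (hf i).le
    calc ((∑ j, π j) + πadm) * (1 + R) * f i * ((∑ j, f j * I j ω) + fadm * Iadm ω)
        ≤ ((∑ j, π j) + πadm) * (1 + R) * f i * (∑ j, f j) :=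
          mul_le_mul_of_nonneg_left hDle hnum
      _ = (1 + R) * ((∑ j, π j) + πadm) * f i * (∑ j, f j) := by ring
end

section
/- Under the T allocation scheme, in which each participant's share equals his investment (f_i = π_i for i = 1, …, n), every participant's payout satisfies W_i(ω) ≥ π_i · (1+R) · I_i(ω) for all outcomes ω; i.e. upon survival each participant receives at least the accumulated value of his initial investment. -/
open MeasureTheory Finset

/-- Under the T allocation scheme (`f_i = π_i` for every participant), upon survival each
participant receives at least the accumulated value of his initial investment:
`W_i(ω) ≥ π_i · (1+R) · I_i(ω)` for all outcomes ω. -/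
theorem tontine_T_scheme_payout_ge_investment
    {Ω : Type*} [MeasurableSpace Ω] (P : Measure Ω) [IsProbabilityMeasure P]
    (n : ℕ) (hn : 1 ≤ n)
    (I : Fin n → Ω → ℝ) (hI01 : ∀ j ω, I j ω = 0 ∨ I j ω = 1)
    (hImeas : ∀ j, Measurable (I j))
    (Iadm : Ω → ℝ) (hIadm : ∀ ω, Iadm ω = ∏ j, (1 - I j ω))
    (hadm0 : 0 < P {ω | Iadm ω = 1}) (hadm1 : P {ω | Iadm ω = 1} < 1)
    (π : Fin n → ℝ) (hπ : ∀ j, 0 < π j) (πadm : ℝ) (hπadm : 0 ≤ πadm)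
    (f : Fin n → ℝ) (hf : ∀ j, 0 < f j) (fadm : ℝ) (hfadm : 0 < fadm)
    (hT : ∀ i, f i = π i)
    (R : ℝ) (hR : 0 ≤ R)
    (W : Fin n → Ω → ℝ)
    (hW : ∀ i ω, W i ω =
      (1 + R) * ((∑ j, π j) + πadm) * (f i * I i ω) /
        ((∑ j, f j * I j ω) + fadm * Iadm ω)) :
    ∀ (i : Fin n) (ω : Ω), W i ω ≥ π i * (1 + R) * I i ω := by
  intro i ω
  rcases hI01 i ω with h0 | h1
  · rw [hW, h0]
    simp
  · -- I i ω = 1, so Iadm ω = 0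
    have hadm : Iadm ω = 0 := by
      rw [hIadm]
      exact Finset.prod_eq_zero (Finset.mem_univ i) (by rw [h1]; ring)
    rw [hW, h1, hadm]
    have hIle : ∀ j, I j ω ≤ 1 := fun j => by rcases hI01 j ω with h | h <;> simp [h]
    have hI0 : ∀ j, 0 ≤ I j ω := fun j => by rcases hI01 j ω with h | h <;> simp [h]
    set D : ℝ := ∑ j, f j * I j ω with hD
    have hDpos : 0 < D := by
      have : f i * I i ω ≤ D := by
        apply Finset.single_le_sum (f := fun j => f j * I j ω) (fun j _ => mul_nonneg (hf j).le (hI0 j)) (Finset.mem_univ i)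
      rw [h1] at this
      nlinarith [hf i]
    have hDle : D ≤ (∑ j, π j) + πadm := by
      have : D ≤ ∑ j, π j := by
        apply Finset.sum_le_sum
        intro j _
        rw [hT j]
        nlinarith [hπ j, hIle j, hI0 j]
      linarith
    rw [mul_one, mul_one, mul_zero, add_zero, ge_iff_le, le_div_iff₀ hDpos]
    have h1R : (0:ℝ) < 1 + R := by linarith
    have := mul_le_mul_of_nonneg_left hDle (by nlinarith [hπ i] : (0:ℝ) ≤ π i * (1 + R))
    calc π i * (1 + R) * D ≤ π i * (1 + R) * ((∑ j, π j) + πadm) := this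
      _ = (1 + R) * ((∑ j, π j) + πadm) * f i := by rw [hT i]; ring
end

section
/- (Theorem 2) If the tontine fund (I, π, f) is actuarially fair for each of its n participants, then it is also actuarially fair for the administrator; equivalently, the n fairness conditions π_i(1+R) = E[W_i] (i = 1, …, n) imply π_{n+1} = (Σ_{j=1}^{n} π_j) · P[I_{n+1} = 1] / P[I_{n+1} = 0]. -/
open MeasureTheory Finset

/-- Theorem 2: if the tontine fund is actuarially fair for each of its `n` participants,
then it is also actuarially fair for the administrator, i.e.
`π_{n+1}·(1+R) = E[W_{n+1}]`, and `π_{n+1} = (Σ_{j=1}^n π_j) · P[I_{n+1}=1]/P[I_{n+1}=0]`. -/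
theorem tontine_fair_participants_implies_fair_administrator
    {Ω : Type*} [MeasurableSpace Ω] (P : Measure Ω) [IsProbabilityMeasure P]
    (n : ℕ) (hn : 1 ≤ n)
    (I : Fin n → Ω → ℝ) (hI01 : ∀ j ω, I j ω = 0 ∨ I j ω = 1)
    (hImeas : ∀ j, Measurable (I j))
    (Iadm : Ω → ℝ) (hIadm : ∀ ω, Iadm ω = ∏ j, (1 - I j ω))
    (hadm0 : 0 < P {ω | Iadm ω = 1}) (hadm1 : P {ω | Iadm ω = 1} < 1)
    (π : Fin n → ℝ) (hπ : ∀ j, 0 < π j) (πadm : ℝ) (hπadm : 0 ≤ πadm)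
    (f : Fin n → ℝ) (hf : ∀ j, 0 < f j) (fadm : ℝ) (hfadm : 0 < fadm)
    (R : ℝ) (hR : 0 ≤ R)
    (W : Fin n → Ω → ℝ)
    (hW : ∀ i ω, W i ω =
      (1 + R) * ((∑ j, π j) + πadm) * (f i * I i ω) /
        ((∑ j, f j * I j ω) + fadm * Iadm ω))
    (Wadm : Ω → ℝ)
    (hWadm : ∀ ω, Wadm ω =
      (1 + R) * ((∑ j, π j) + πadm) * (fadm * Iadm ω) /
        ((∑ j, f j * I j ω) + fadm * Iadm ω))
    (hfair : ∀ i, π i * (1 + R) = ∫ ω, W i ω ∂P) :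
    πadm * (1 + R) = ∫ ω, Wadm ω ∂P ∧
    πadm = (∑ j, π j) *
      (P {ω | Iadm ω = 1}).toReal / (P {ω | Iadm ω = 0}).toReal := by
  classical
  have hNe : Nonempty (Fin n) := ⟨⟨0, hn⟩⟩
  set C : ℝ := (1 + R) * ((∑ j, π j) + πadm) with hC
  set A : Set Ω := {ω | Iadm ω = 1} with hA
  have hR1 : (0:ℝ) < 1 + R := by linarith
  have hπsum : 0 < ∑ j, π j := Finset.sum_pos (fun j _ => hπ j) Finset.univ_nonempty
  have hC0 : 0 < C := mul_pos hR1 (by linarith)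
  -- characterization of Iadm = 1
  have hIadm1 : ∀ ω, Iadm ω = 1 ↔ ∀ j, I j ω = 0 := by
    intro ω
    rw [hIadm]
    constructor
    · intro h j
      by_contra hj
      have hj1 : I j ω = 1 := (hI01 j ω).resolve_left hj
      have hz : (∏ k, (1 - I k ω)) = 0 :=
        Finset.prod_eq_zero (Finset.mem_univ j) (by rw [hj1]; ring)
      rw [hz] at h; norm_num at h
    · intro h
      rw [Finset.prod_eq_one]
      intro j _; rw [h j]; ring
  have hval : ∀ ω, Iadm ω = 0 ∨ Iadm ω = 1 := by
    intro ω
    by_cases h : ∀ j, I j ω = 0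
    · right; exact (hIadm1 ω).2 h
    · left
      push_neg at h
      obtain ⟨j, hj⟩ := h
      have hj1 : I j ω = 1 := (hI01 j ω).resolve_left hj
      rw [hIadm]
      exact Finset.prod_eq_zero (Finset.mem_univ j) (by rw [hj1]; ring)
  have htermnn : ∀ ω j, 0 ≤ f j * I j ω := by
    intro ω j
    rcases hI01 j ω with h | h <;> rw [h] <;> nlinarith [hf j]
  have hsumpos : ∀ ω, Iadm ω = 0 → 0 < ∑ j, f j * I j ω := by
    intro ω h0
    have h : ¬ ∀ j, I j ω = 0 := by
      intro h
      have := (hIadm1 ω).2 h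
      rw [this] at h0; norm_num at h0
    push_neg at h
    obtain ⟨j, hj⟩ := h
    have hj1 : I j ω = 1 := (hI01 j ω).resolve_left hj
    refine Finset.sum_pos' (fun k _ => htermnn ω k) ⟨j, Finset.mem_univ j, ?_⟩
    rw [hj1]; simpa using hf j
  have hsumzero : ∀ ω, Iadm ω = 1 → (∑ j, f j * I j ω) = 0 := by
    intro ω h1
    exact Finset.sum_eq_zero (fun j _ => by rw [(hIadm1 ω).1 h1 j]; ring)
  have hD : ∀ ω, 0 < (∑ j, f j * I j ω) + fadm * Iadm ω := by
    intro ω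
    rcases hval ω with h0 | h1
    · have := hsumpos ω h0
      rw [h0]; linarith
    · rw [hsumzero ω h1, h1]; simpa using hfadm
  -- pointwise formulas
  have hWadm_pt : ∀ ω, Wadm ω = A.indicator (fun _ => C) ω := by
    intro ω
    rcases hval ω with h0 | h1
    · have hωA : ω ∉ A := by simp [hA, h0]
      rw [Set.indicator_of_notMem hωA, hWadm, h0]
      simp
    · have hωA : ω ∈ A := h1
      rw [Set.indicator_of_mem hωA, hWadm, h1, hsumzero ω h1]
      rw [mul_one, zero_add, mul_div_assoc, div_self (ne_of_gt hfadm), mul_one]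
  have hSum_pt : ∀ ω, (∑ i, W i ω) = Aᶜ.indicator (fun _ => C) ω := by
    intro ω
    rcases hval ω with h0 | h1
    · have hωA : ω ∈ Aᶜ := by simp [hA, h0]
      rw [Set.indicator_of_mem hωA]
      have hs := hsumpos ω h0
      have hDe : (∑ j, f j * I j ω) + fadm * Iadm ω = ∑ j, f j * I j ω := by
        rw [h0]; ring
      calc (∑ i, W i ω)
          = ∑ i, C * (f i * I i ω) / (∑ j, f j * I j ω) := by
            refine Finset.sum_congr rfl (fun i _ => ?_)
            rw [hW i ω, hDe]
        _ = (∑ i, C * (f i * I i ω)) / (∑ j, f j * I j ω) := by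
            rw [Finset.sum_div]
        _ = C * (∑ i, f i * I i ω) / (∑ j, f j * I j ω) := by
            rw [Finset.mul_sum]
        _ = C := by rw [mul_div_assoc, div_self (ne_of_gt hs), mul_one]
    · have hωA : ω ∉ Aᶜ := by simp [hA, h1]
      rw [Set.indicator_of_notMem hωA]
      refine Finset.sum_eq_zero (fun i _ => ?_)
      rw [hW i ω, (hIadm1 ω).1 h1 i]
      simp
  -- measurability
  have hIadmMeas : Measurable Iadm := by
    have h : Iadm = fun ω => ∏ j, (1 - I j ω) := funext hIadm
    rw [h]
    exact Finset.measurable_prod _ (fun j _ => measurable_const.sub (hImeas j))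
  have hAmeas : MeasurableSet A := hIadmMeas (measurableSet_singleton 1)
  have hDmeas : Measurable (fun ω => (∑ j, f j * I j ω) + fadm * Iadm ω) :=
    (Finset.measurable_sum _ (fun j _ => measurable_const.mul (hImeas j))).add
      (measurable_const.mul hIadmMeas)
  have hWmeas : ∀ i, Measurable (W i) := by
    intro i
    have h : W i = fun ω => (1 + R) * ((∑ j, π j) + πadm) * (f i * I i ω) /
        ((∑ j, f j * I j ω) + fadm * Iadm ω) := funext (hW i)
    rw [h]
    exact (measurable_const.mul (measurable_const.mul (hImeas i))).div hDmeas
  -- integrability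
  have hWint : ∀ i, Integrable (W i) P := by
    intro i
    refine Integrable.mono' (integrable_const C) (hWmeas i).aestronglyMeasurable ?_
    filter_upwards with ω
    rw [hW i ω]
    have hDpos := hD ω
    have hnum0 : 0 ≤ f i * I i ω := htermnn ω i
    have hnumle : f i * I i ω ≤ (∑ j, f j * I j ω) + fadm * Iadm ω := by
      have h1 : f i * I i ω ≤ ∑ j, f j * I j ω :=
        Finset.single_le_sum (f := fun j => f j * I j ω) (fun j _ => htermnn ω j)
          (Finset.mem_univ i)
      have h2 : 0 ≤ fadm * Iadm ω := by
        rcases hval ω with h | h <;> rw [h] <;> nlinarith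
      linarith
    rw [Real.norm_eq_abs, abs_of_nonneg (by positivity)]
    rw [mul_div_assoc]
    have hle1 : (f i * I i ω) / ((∑ j, f j * I j ω) + fadm * Iadm ω) ≤ 1 :=
      (div_le_one hDpos).2 hnumle
    calc (1 + R) * ((∑ j, π j) + πadm) *
          ((f i * I i ω) / ((∑ j, f j * I j ω) + fadm * Iadm ω))
        ≤ (1 + R) * ((∑ j, π j) + πadm) * 1 := by
          apply mul_le_mul_of_nonneg_left hle1 (le_of_lt hC0)
      _ = C := by rw [mul_one]
  -- integrals
  set p : ℝ := (P A).toReal with hp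
  have hintWadm : ∫ ω, Wadm ω ∂P = p * C := by
    rw [show (fun ω => Wadm ω) = A.indicator (fun _ => C) from funext hWadm_pt,
      integral_indicator_const C hAmeas, smul_eq_mul, Measure.real]
  have hintSum : ∫ ω, (∑ i, W i ω) ∂P = (P Aᶜ).toReal * C := by
    rw [show (fun ω => ∑ i, W i ω) = Aᶜ.indicator (fun _ => C) from funext hSum_pt,
      integral_indicator_const C hAmeas.compl, smul_eq_mul, Measure.real]
  have hq : (P Aᶜ).toReal = 1 - p := by
    rw [measure_compl hAmeas (measure_ne_top P A), measure_univ,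
      ENNReal.toReal_sub_of_le prob_le_one (by simp), ENNReal.toReal_one, hp]
  have hp0 : 0 < p := ENNReal.toReal_pos (ne_of_gt hadm0) (measure_ne_top P A)
  have hp1 : p < 1 := by
    have := (ENNReal.toReal_lt_toReal (measure_ne_top P A) ENNReal.one_ne_top).2 hadm1
    simpa using this
  -- main equation from fairness
  have hkey : (∑ j, π j) * (1 + R) = (1 - p) * C := by
    have h1 : ∑ i, ∫ ω, W i ω ∂P = ∫ ω, (∑ i, W i ω) ∂P :=
      (integral_finset_sum _ (fun i _ => hWint i)).symm
    calc (∑ j, π j) * (1 + R) = ∑ i, π i * (1 + R) := by rw [Finset.sum_mul]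
      _ = ∑ i, ∫ ω, W i ω ∂P := Finset.sum_congr rfl (fun i _ => hfair i)
      _ = ∫ ω, (∑ i, W i ω) ∂P := h1
      _ = (P Aᶜ).toReal * C := hintSum
      _ = (1 - p) * C := by rw [hq]
  have hmain : πadm = p * ((∑ j, π j) + πadm) := by
    have hexp : (∑ j, π j) * (1 + R) = (1 - p) * ((1 + R) * ((∑ j, π j) + πadm)) := by
      rw [hkey, hC]
    nlinarith [hexp, hR1]
  have hA0 : {ω | Iadm ω = 0} = Aᶜ := by
    ext ω
    simp only [Set.mem_setOf_eq, Set.mem_compl_iff, hA]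
    constructor
    · intro h h1; rw [h1] at h; norm_num at h
    · intro h; rcases hval ω with h0 | h1
      · exact h0
      · exact absurd h1 h
  constructor
  · rw [hintWadm, hC]
    nlinarith [hmain]
  · rw [hA0, hq]
    have h1p : (0:ℝ) < 1 - p := by linarith
    field_simp
    nlinarith [hmain]
end

section
/- The tontine fund is actuarially fair for the administrator, i.e. π_{n+1}(1+R) = E[W_{n+1}], if and only if π_{n+1} = (Σ_{j=1}^{n} π_j) · P[I_{n+1} = 1] / P[I_{n+1} = 0]. -/
open MeasureTheory Finset

/-- The tontine fund is actuarially fair for the administrator,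
`π_{n+1}·(1+R) = E[W_{n+1}]`, if and only if
`π_{n+1} = (Σ_{j=1}^n π_j) · P[I_{n+1}=1]/P[I_{n+1}=0]`. -/
theorem tontine_administrator_fairness_iff
    {Ω : Type*} [MeasurableSpace Ω] (P : Measure Ω) [IsProbabilityMeasure P]
    (n : ℕ) (hn : 1 ≤ n)
    (I : Fin n → Ω → ℝ) (hI01 : ∀ j ω, I j ω = 0 ∨ I j ω = 1)
    (hImeas : ∀ j, Measurable (I j))
    (Iadm : Ω → ℝ) (hIadm : ∀ ω, Iadm ω = ∏ j, (1 - I j ω))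
    (hadm0 : 0 < P {ω | Iadm ω = 1}) (hadm1 : P {ω | Iadm ω = 1} < 1)
    (π : Fin n → ℝ) (hπ : ∀ j, 0 < π j) (πadm : ℝ) (hπadm : 0 ≤ πadm)
    (f : Fin n → ℝ) (hf : ∀ j, 0 < f j) (fadm : ℝ) (hfadm : 0 < fadm)
    (R : ℝ) (hR : 0 ≤ R)
    (Wadm : Ω → ℝ)
    (hWadm : ∀ ω, Wadm ω =
      (1 + R) * ((∑ j, π j) + πadm) * (fadm * Iadm ω) /
        ((∑ j, f j * I j ω) + fadm * Iadm ω)) :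
    πadm * (1 + R) = ∫ ω, Wadm ω ∂P ↔
    πadm = (∑ j, π j) *
      (P {ω | Iadm ω = 1}).toReal / (P {ω | Iadm ω = 0}).toReal := by
  set S : ℝ := ∑ j, π j with hS
  set c : ℝ := (1 + R) * (S + πadm) with hc
  set A : Set Ω := {ω | Iadm ω = 1} with hA
  -- Iadm takes values in {0,1}
  have hIadm01 : ∀ ω, Iadm ω = 0 ∨ Iadm ω = 1 := by
    intro ω
    rw [hIadm ω]
    by_cases h : ∀ j, I j ω = 0
    · right
      apply Finset.prod_eq_one
      intro j _
      rw [h j]; ring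
    · left
      push_neg at h
      obtain ⟨j, hj⟩ := h
      have : I j ω = 1 := (hI01 j ω).resolve_left hj
      exact Finset.prod_eq_zero (Finset.mem_univ j) (by rw [this]; ring)
  -- pointwise: Wadm = indicator of A with constant c
  have hW : ∀ ω, Wadm ω = A.indicator (fun _ => c) ω := by
    intro ω
    rcases hIadm01 ω with h0 | h1
    · have hnot : ω ∉ A := by simp [hA, h0]
      rw [Set.indicator_of_notMem hnot, hWadm ω, h0]
      simp
    · have hmem : ω ∈ A := h1
      rw [Set.indicator_of_mem hmem, hWadm ω, h1]
      have hzero : ∀ j, I j ω = 0 := by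
        intro j
        by_contra hj
        have hje : I j ω = 1 := (hI01 j ω).resolve_left hj
        have : (∏ k, (1 - I k ω)) = 0 :=
          Finset.prod_eq_zero (Finset.mem_univ j) (by rw [hje]; ring)
        rw [hIadm ω, this] at h1
        norm_num at h1
      have hsum : (∑ j, f j * I j ω) = 0 := by
        apply Finset.sum_eq_zero
        intro j _
        rw [hzero j]; ring
      rw [hsum]
      field_simp [hc]
      ring
  have hAmeas : MeasurableSet A := by
    have hm : Measurable Iadm := by
      have : Iadm = fun ω => ∏ j, (1 - I j ω) := funext hIadm
      rw [this]
      exact Finset.measurable_prod _ fun j _ => (measurable_const.sub (hImeas j))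
    exact hm (measurableSet_singleton 1)
  -- compute the integral
  have hint : ∫ ω, Wadm ω ∂P = c * (P A).toReal := by
    calc ∫ ω, Wadm ω ∂P = ∫ ω, A.indicator (fun _ => c) ω ∂P := by
          exact integral_congr_ae (Filter.Eventually.of_forall hW)
      _ = (P A).toReal • c := integral_indicator_const c hAmeas
      _ = c * (P A).toReal := by rw [smul_eq_mul, mul_comm]
  set p : ℝ := (P A).toReal with hp
  have hPfin : P A ≠ ⊤ := (measure_lt_top P A).ne
  have hp1 : p < 1 := by
    rw [hp]
    have := (ENNReal.toReal_lt_toReal hPfin ENNReal.one_ne_top).mpr hadm1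
    simpa using this
  -- the complement set
  have hcompl : {ω | Iadm ω = 0} = Aᶜ := by
    ext ω
    rcases hIadm01 ω with h | h <;> simp [hA, h]
  have hq : (P {ω | Iadm ω = 0}).toReal = 1 - p := by
    rw [hcompl, measure_compl hAmeas hPfin, measure_univ]
    rw [ENNReal.toReal_sub_of_le hadm1.le ENNReal.one_ne_top]
    simp [hp]
  rw [hint, hq]
  have h1p : (0:ℝ) < 1 - p := by linarith
  have hR1 : (0:ℝ) < 1 + R := by linarith
  rw [eq_div_iff h1p.ne', hc]
  constructor
  · intro h
    have : πadm = (S + πadm) * p := by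
      have := mul_left_cancel₀ hR1.ne' (by linarith [h] : (1+R) * πadm = (1+R) * ((S + πadm) * p))
      linarith [this]
    nlinarith [this]
  · intro h
    nlinarith [h]
end

section
/- (Theorem 3) The tontine fund (I, π, f) with π_{n+1} > 0 is actuarially fair for each of its n participants if and only if for every i = 1, …, n one has π_i / π_{n+1} = E[ f_i I_i / (Σ_{j=1}^{n} f_j I_j) | I_{n+1} = 0 ] · P[I_{n+1} = 0] / P[I_{n+1} = 1]. -/
open MeasureTheory Finset

private lemma tontine_algebra {n : ℕ} (π : Fin n → ℝ) (hπ : ∀ j, 0 < π j)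
    (πadm : ℝ) (hπadm : 0 < πadm) (J : Fin n → ℝ) (p0 p1 : ℝ)
    (hp0 : 0 < p0) (hp1 : 0 < p1) (hsum : ∑ i, J i = p0) (hp01 : p0 + p1 = 1) :
    (∀ i, π i = ((∑ j, π j) + πadm) * J i) ↔ (∀ i, π i * p1 = J i * πadm) := by
  constructor
  · intro h i
    have hsumπ : ∑ j, π j = ((∑ j, π j) + πadm) * p0 := by
      rw [← hsum, Finset.mul_sum]; exact Finset.sum_congr rfl fun j _ => h j
    have hπa : πadm = ((∑ j, π j) + πadm) * p1 := by
      linear_combination (-1 : ℝ) * hsumπ - ((∑ j, π j) + πadm) * hp01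
    rw [h i]
    nth_rewrite 2 [hπa]
    ring
  · intro h i
    have h1 : (∑ j, π j) * p1 = p0 * πadm := by
      calc (∑ j, π j) * p1 = ∑ j, π j * p1 := by rw [Finset.sum_mul]
        _ = ∑ j, J j * πadm := Finset.sum_congr rfl fun j _ => h j
        _ = (∑ j, J j) * πadm := by rw [Finset.sum_mul]
        _ = p0 * πadm := by rw [hsum]
    have h2 : ((∑ j, π j) + πadm) * p1 = πadm := by
      linear_combination h1 + πadm * hp01
    have h3 : π i * p1 = ((∑ j, π j) + πadm) * J i * p1 := by
      linear_combination h i - J i * h2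
    exact mul_right_cancel₀ hp1.ne' h3

/-- Theorem 3: the tontine fund is actuarially fair for each of its `n` participants if and
only if for every `i`:
`π_i / π_{n+1} = E[f_i I_i / (Σ_{j=1}^n f_j I_j) | I_{n+1}=0] · P[I_{n+1}=0]/P[I_{n+1}=1]`. -/
theorem tontine_fairness_characterization
    {Ω : Type*} [MeasurableSpace Ω] (P : Measure Ω) [IsProbabilityMeasure P]
    (n : ℕ) (hn : 1 ≤ n)
    (I : Fin n → Ω → ℝ) (hI01 : ∀ j ω, I j ω = 0 ∨ I j ω = 1)
    (hImeas : ∀ j, Measurable (I j))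
    (Iadm : Ω → ℝ) (hIadm : ∀ ω, Iadm ω = ∏ j, (1 - I j ω))
    (hadm0 : 0 < P {ω | Iadm ω = 1}) (hadm1 : P {ω | Iadm ω = 1} < 1)
    (π : Fin n → ℝ) (hπ : ∀ j, 0 < π j) (πadm : ℝ) (hπadm : 0 < πadm)
    (f : Fin n → ℝ) (hf : ∀ j, 0 < f j) (fadm : ℝ) (hfadm : 0 < fadm)
    (R : ℝ) (hR : 0 ≤ R)
    (W : Fin n → Ω → ℝ)
    (hW : ∀ i ω, W i ω =
      (1 + R) * ((∑ j, π j) + πadm) * (f i * I i ω) /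
        ((∑ j, f j * I j ω) + fadm * Iadm ω)) :
    (∀ i, π i * (1 + R) = ∫ ω, W i ω ∂P) ↔
    (∀ i, π i / πadm =
      ((∫ ω in {ω | Iadm ω = 0}, f i * I i ω / (∑ j, f j * I j ω) ∂P) /
          (P {ω | Iadm ω = 0}).toReal) *
        ((P {ω | Iadm ω = 0}).toReal / (P {ω | Iadm ω = 1}).toReal)) := by
  -- basic 0/1 facts
  have hIadm01 : ∀ ω, Iadm ω = 0 ∨ Iadm ω = 1 := by
    intro ω
    rw [hIadm]
    refine Finset.prod_induction _ (fun x => x = 0 ∨ x = 1) ?_ (Or.inr rfl) ?_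
    · rintro a b (ha | ha) (hb | hb) <;> simp [ha, hb]
    · intro j _
      rcases hI01 j ω with h | h <;> simp [h]
  have hA_allzero : ∀ ω, Iadm ω = 1 → ∀ j, I j ω = 0 := by
    intro ω hω j
    rcases hI01 j ω with h | h
    · exact h
    · exfalso
      have h0 : Iadm ω = 0 := by
        rw [hIadm]
        exact Finset.prod_eq_zero (Finset.mem_univ j) (by rw [h]; ring)
      rw [h0] at hω; norm_num at hω
  have hnonneg : ∀ ω (j : Fin n), 0 ≤ f j * I j ω := by
    intro ω j
    rcases hI01 j ω with h | h <;> rw [h] <;> [simp; simpa using (hf j).le]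
  have hsumnonneg : ∀ ω, 0 ≤ ∑ j, f j * I j ω :=
    fun ω => Finset.sum_nonneg fun j _ => hnonneg ω j
  have hle : ∀ ω (i : Fin n), f i * I i ω ≤ ∑ j, f j * I j ω :=
    fun ω i => Finset.single_le_sum (fun j _ => hnonneg ω j) (Finset.mem_univ i)
  have hAcsum_pos : ∀ ω, Iadm ω = 0 → 0 < ∑ j, f j * I j ω := by
    intro ω hω
    rw [hIadm] at hω
    obtain ⟨j, _, hj⟩ := Finset.prod_eq_zero_iff.mp hω
    have hIj : I j ω = 1 := by
      rcases hI01 j ω with h | h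
      · rw [h] at hj; norm_num at hj
      · exact h
    calc (0 : ℝ) < f j * I j ω := by rw [hIj]; simpa using hf j
      _ ≤ _ := hle ω j
  -- measurability
  have hIadmMeas : Measurable Iadm := by
    have hfe : Iadm = fun ω => ∏ j, (1 - I j ω) := funext hIadm
    rw [hfe]
    exact Finset.measurable_prod _ fun j _ => measurable_const.sub (hImeas j)
  have hA : MeasurableSet {ω | Iadm ω = 1} := hIadmMeas (measurableSet_singleton 1)
  have hcompl : {ω | Iadm ω = 0} = {ω | Iadm ω = 1}ᶜ := by
    ext ω
    simp only [Set.mem_compl_iff, Set.mem_setOf_eq]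
    rcases hIadm01 ω with h | h <;> simp [h]
  have hAc : MeasurableSet {ω | Iadm ω = 0} := by rw [hcompl]; exact hA.compl
  -- probabilities
  set p1 : ℝ := (P {ω | Iadm ω = 1}).toReal with hp1def
  set p0 : ℝ := (P {ω | Iadm ω = 0}).toReal with hp0def
  have hp1pos : 0 < p1 := ENNReal.toReal_pos hadm0.ne' (measure_ne_top P _)
  have hPAc : P {ω | Iadm ω = 0} = 1 - P {ω | Iadm ω = 1} := by
    rw [hcompl, prob_compl_eq_one_sub hA]
  have hp0pos : 0 < p0 := by
    rw [hp0def, hPAc]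
    exact ENNReal.toReal_pos (tsub_pos_of_lt hadm1).ne' (by simp)
  have hp01 : p0 + p1 = 1 := by
    rw [hp0def, hPAc, ENNReal.toReal_sub_of_le hadm1.le ENNReal.one_ne_top]
    simp [hp1def]
  -- the normalized payoff functions
  set g : Fin n → Ω → ℝ := fun i ω => f i * I i ω / (∑ j, f j * I j ω) with hgdef
  have hg0 : ∀ i ω, 0 ≤ g i ω := fun i ω => div_nonneg (hnonneg ω i) (hsumnonneg ω)
  have hg1 : ∀ i ω, g i ω ≤ 1 := fun i ω => div_le_one_of_le₀ (hle ω i) (hsumnonneg ω)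
  have hgmeas : ∀ i, Measurable (g i) := by
    intro i
    exact (measurable_const.mul (hImeas i)).div
      (Finset.measurable_sum _ fun j _ => measurable_const.mul (hImeas j))
  have hgint : ∀ i, Integrable (g i) P := by
    intro i
    refine (integrable_const (1 : ℝ)).mono' (hgmeas i).aestronglyMeasurable ?_
    filter_upwards with ω
    rw [Real.norm_eq_abs, abs_of_nonneg (hg0 i ω)]
    exact hg1 i ω
  -- indicator identity
  have hind : ∀ i ω, f i * I i ω / ((∑ j, f j * I j ω) + fadm * Iadm ω)
      = Set.indicator {ω | Iadm ω = 0} (g i) ω := by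
    intro i ω
    rcases hIadm01 ω with h | h
    · rw [Set.indicator_of_mem (by exact h), hgdef]
      simp [h]
    · rw [Set.indicator_of_notMem (by simp [h])]
      have hz : I i ω = 0 := hA_allzero ω h i
      simp [hz]
  -- integral of W
  have hWint : ∀ i, ∫ ω, W i ω ∂P
      = (1 + R) * ((∑ j, π j) + πadm) * ∫ ω in {ω | Iadm ω = 0}, g i ω ∂P := by
    intro i
    have h1 : ∀ ω, W i ω
        = (1 + R) * ((∑ j, π j) + πadm) * Set.indicator {ω | Iadm ω = 0} (g i) ω := by
      intro ω
      rw [hW i ω, mul_div_assoc, hind i ω]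
    rw [integral_congr_ae (Filter.Eventually.of_forall h1), integral_const_mul,
      integral_indicator hAc]
  -- sum of conditional integrals
  have hJsum : ∑ i, ∫ ω in {ω | Iadm ω = 0}, g i ω ∂P = p0 := by
    rw [← integral_finset_sum _ (fun i _ => (hgint i).restrict)]
    have : ∫ ω in {ω | Iadm ω = 0}, (∑ i, g i ω) ∂P
        = ∫ ω in {ω | Iadm ω = 0}, (1 : ℝ) ∂P := by
      refine setIntegral_congr_fun hAc fun ω hω => ?_
      have hs : (0 : ℝ) < ∑ j, f j * I j ω := hAcsum_pos ω hω
      rw [hgdef]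
      simp only
      rw [← Finset.sum_div, div_self hs.ne']
    rw [this]
    simp [hp0def]
    rfl
  -- rewrite both sides of the iff
  have hL : ∀ i, (π i * (1 + R) = ∫ ω, W i ω ∂P)
      ↔ (π i = ((∑ j, π j) + πadm) * ∫ ω in {ω | Iadm ω = 0}, g i ω ∂P) := by
    intro i
    rw [hWint i]
    constructor
    · intro h
      have h1R : (0 : ℝ) < 1 + R := by linarith
      apply mul_right_cancel₀ h1R.ne'
      linear_combination h
    · intro h
      rw [h]; ring
  have hR' : ∀ i, (π i / πadm =
      ((∫ ω in {ω | Iadm ω = 0}, f i * I i ω / (∑ j, f j * I j ω) ∂P) / p0) * (p0 / p1))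
      ↔ (π i * p1 = (∫ ω in {ω | Iadm ω = 0}, g i ω ∂P) * πadm) := by
    intro i
    have heq : (∫ ω in {ω | Iadm ω = 0}, f i * I i ω / (∑ j, f j * I j ω) ∂P)
        = ∫ ω in {ω | Iadm ω = 0}, g i ω ∂P := rfl
    rw [heq, div_mul_div_comm,
      mul_comm (∫ ω in {ω | Iadm ω = 0}, g i ω ∂P) p0,
      mul_div_mul_left _ _ hp0pos.ne',
      div_eq_div_iff hπadm.ne' hp1pos.ne']
  simp_rw [hL, hR']
  exact tontine_algebra π hπ πadm hπadm _ p0 p1 hp0pos hp1pos hJsum hp01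
end

section
/- (Theorem 4) The tontine fund (I, π, f) is collectively actuarially fair for its participants, i.e. (Σ_{j=1}^{n} π_j)·(1+R) = E[Σ_{j=1}^{n} W_j], if and only if it is actuarially fair for the administrator, i.e. π_{n+1}·(1+R) = E[W_{n+1}]; equivalently, both conditions hold exactly when π_{n+1} = (Σ_{j=1}^{n} π_j) · P[I_{n+1} = 1] / P[I_{n+1} = 0]. -/
open MeasureTheory Finset

/-- Theorem 4: the tontine fund is collectively actuarially fair for its participants,
`(Σ_{j=1}^n π_j)·(1+R) = E[Σ_{j=1}^n W_j]`, if and only if it is actuarially fair for the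
administrator, `π_{n+1}·(1+R) = E[W_{n+1}]`; equivalently, both hold exactly when
`π_{n+1} = (Σ_{j=1}^n π_j) · P[I_{n+1}=1]/P[I_{n+1}=0]`. -/
theorem tontine_collective_fairness_iff_administrator_fairness
    {Ω : Type*} [MeasurableSpace Ω] (P : Measure Ω) [IsProbabilityMeasure P]
    (n : ℕ) (hn : 1 ≤ n)
    (I : Fin n → Ω → ℝ) (hI01 : ∀ j ω, I j ω = 0 ∨ I j ω = 1)
    (hImeas : ∀ j, Measurable (I j))
    (Iadm : Ω → ℝ) (hIadm : ∀ ω, Iadm ω = ∏ j, (1 - I j ω))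
    (hadm0 : 0 < P {ω | Iadm ω = 1}) (hadm1 : P {ω | Iadm ω = 1} < 1)
    (π : Fin n → ℝ) (hπ : ∀ j, 0 < π j) (πadm : ℝ) (hπadm : 0 ≤ πadm)
    (f : Fin n → ℝ) (hf : ∀ j, 0 < f j) (fadm : ℝ) (hfadm : 0 < fadm)
    (R : ℝ) (hR : 0 ≤ R)
    (W : Fin n → Ω → ℝ)
    (hW : ∀ i ω, W i ω =
      (1 + R) * ((∑ j, π j) + πadm) * (f i * I i ω) /
        ((∑ j, f j * I j ω) + fadm * Iadm ω))
    (Wadm : Ω → ℝ)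
    (hWadm : ∀ ω, Wadm ω =
      (1 + R) * ((∑ j, π j) + πadm) * (fadm * Iadm ω) /
        ((∑ j, f j * I j ω) + fadm * Iadm ω)) :
    ((∑ j, π j) * (1 + R) = ∫ ω, (∑ j, W j ω) ∂P ↔
      πadm * (1 + R) = ∫ ω, Wadm ω ∂P) ∧
    (πadm * (1 + R) = ∫ ω, Wadm ω ∂P ↔
      πadm = (∑ j, π j) *
        (P {ω | Iadm ω = 1}).toReal / (P {ω | Iadm ω = 0}).toReal) := by
  have hNE : Nonempty (Fin n) := ⟨⟨0, by omega⟩⟩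
  have hR1 : (0:ℝ) < 1 + R := by linarith
  set S : ℝ := ∑ j, π j with hSdef
  set T : ℝ := S + πadm with hTdef
  set c : ℝ := (1 + R) * T with hcdef
  -- Iadm takes values in {0,1}
  have hIadm01 : ∀ ω, Iadm ω = 0 ∨ Iadm ω = 1 := by
    intro ω
    rw [hIadm]
    by_cases h : ∀ j, I j ω = 0
    · right
      apply Finset.prod_eq_one
      intro j _
      rw [h j]; ring
    · left
      push_neg at h
      obtain ⟨j, hj⟩ := h
      have hj1 : I j ω = 1 := (hI01 j ω).resolve_left hj
      exact Finset.prod_eq_zero (Finset.mem_univ j) (by rw [hj1]; ring)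
  -- On {Iadm = 1}, all I j = 0
  have hA1 : ∀ ω, Iadm ω = 1 → ∀ j, I j ω = 0 := by
    intro ω h j
    by_contra hj
    have hj1 : I j ω = 1 := (hI01 j ω).resolve_left hj
    have : Iadm ω = 0 := by
      rw [hIadm]
      exact Finset.prod_eq_zero (Finset.mem_univ j) (by rw [hj1]; ring)
    rw [h] at this; norm_num at this
  -- On {Iadm = 0}, the participants' sum is positive
  have hA0 : ∀ ω, Iadm ω = 0 → 0 < ∑ j, f j * I j ω := by
    intro ω h
    rw [hIadm] at h
    obtain ⟨j, _, hj⟩ := Finset.prod_eq_zero_iff.mp h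
    have hj1 : I j ω = 1 := by linarith
    apply Finset.sum_pos'
    · intro i _
      rcases hI01 i ω with h0 | h0 <;> rw [h0]
      · simp
      · simpa using (hf i).le
    · exact ⟨j, Finset.mem_univ j, by rw [hj1]; simpa using hf j⟩
  -- Wadm is the indicator of {Iadm = 1} times c
  have hWadm_eq : Wadm = Set.indicator {ω | Iadm ω = 1} (fun _ => c) := by
    funext ω
    rcases hIadm01 ω with h | h
    · have : ω ∉ {ω | Iadm ω = 1} := by simp [h]
      rw [Set.indicator_of_notMem this, hWadm, h]
      simp
    · have hmem : ω ∈ {ω | Iadm ω = 1} := h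
      rw [Set.indicator_of_mem hmem, hWadm, h]
      have hs : ∑ j, f j * I j ω = 0 :=
        Finset.sum_eq_zero (fun j _ => by rw [hA1 ω h j]; ring)
      rw [hs]
      field_simp
      ring
  -- The participants' total payout is the indicator of {Iadm = 0} times c
  have hWsum_eq : (fun ω => ∑ j, W j ω) = Set.indicator {ω | Iadm ω = 0} (fun _ => c) := by
    funext ω
    rcases hIadm01 ω with h | h
    · have hmem : ω ∈ {ω | Iadm ω = 0} := h
      rw [Set.indicator_of_mem hmem]
      have hD : 0 < ∑ j, f j * I j ω := hA0 ω h
      have : ∀ j : Fin n, W j ω = c * (f j * I j ω) / ((∑ j, f j * I j ω) + fadm * Iadm ω) := by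
        intro j; rw [hW]
      rw [Finset.sum_congr rfl (fun j _ => this j), ← Finset.sum_div, ← Finset.mul_sum, h]
      field_simp
      ring
    · have : ω ∉ {ω | Iadm ω = 0} := by simp [h]
      rw [Set.indicator_of_notMem this]
      apply Finset.sum_eq_zero
      intro j _
      rw [hW, hA1 ω h j]
      simp
  -- measurability
  have hIadmMeas : Measurable Iadm := by
    have : Iadm = fun ω => ∏ j, (1 - I j ω) := funext hIadm
    rw [this]
    exact Finset.measurable_prod _ (fun j _ => measurable_const.sub (hImeas j))
  have hAmeas : MeasurableSet {ω | Iadm ω = 1} := hIadmMeas (measurableSet_singleton 1)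
  have hAcompl : {ω | Iadm ω = 0} = {ω | Iadm ω = 1}ᶜ := by
    ext ω
    simp only [Set.mem_setOf_eq, Set.mem_compl_iff]
    constructor
    · intro h h1; rw [h] at h1; norm_num at h1
    · intro h; exact (hIadm01 ω).resolve_right h
  set p : ℝ := (P {ω | Iadm ω = 1}).toReal with hpdef
  have hfin : P {ω | Iadm ω = 1} ≠ ⊤ := measure_ne_top P _
  have hp0 : 0 < p := ENNReal.toReal_pos hadm0.ne' hfin
  have hp1 : p < 1 := by
    have := (ENNReal.toReal_lt_toReal hfin ENNReal.one_ne_top).mpr hadm1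
    simpa using this
  have hPc : (P {ω | Iadm ω = 0}).toReal = 1 - p := by
    rw [hAcompl, measure_compl hAmeas hfin, measure_univ,
      ENNReal.toReal_sub_of_le hadm1.le ENNReal.one_ne_top]
    simp [hpdef]
  -- compute the two integrals
  have hint1 : ∫ ω, Wadm ω ∂P = p * c := by
    rw [hWadm_eq, integral_indicator_const _ hAmeas]
    simp [hpdef, smul_eq_mul]
    left; rfl
  have hint2 : ∫ ω, (∑ j, W j ω) ∂P = (1 - p) * c := by
    have hAc : MeasurableSet {ω | Iadm ω = 0} := by
      rw [hAcompl]; exact hAmeas.compl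
    calc ∫ ω, (∑ j, W j ω) ∂P = ∫ ω, Set.indicator {ω | Iadm ω = 0} (fun _ => c) ω ∂P := by
          rw [← hWsum_eq]
      _ = (P {ω | Iadm ω = 0}).toReal • c := integral_indicator_const _ hAc
      _ = (1 - p) * c := by rw [hPc, smul_eq_mul]
  rw [hint1, hint2, hPc]
  have hkey : S * (1 + R) + πadm * (1 + R) = (1 - p) * c + p * c := by
    rw [hcdef, hTdef]; ring
  constructor
  · constructor
    · intro h; linarith
    · intro h; linarith
  · constructor
    · intro h
      have h' : πadm = p * T := by
        have h2 : πadm * (1 + R) = (p * T) * (1 + R) := by rw [h, hcdef]; ring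
        exact mul_right_cancel₀ hR1.ne' h2
      rw [hTdef] at h'
      rw [eq_div_iff (by linarith : (1:ℝ) - p ≠ 0)]
      nlinarith [h']
    · intro h
      have h' : πadm * (1 - p) = S * p := by
        rw [h]
        exact div_mul_cancel₀ _ (by linarith : (1:ℝ) - p ≠ 0)
      rw [hcdef, hTdef]
      nlinarith [h']
end

section
/- The expected value of the total payout to the n participants equals E[Σ_{j=1}^{n} W_j] = (1+R) · (Σ_{j=1}^{n+1} π_j) · P[I_{n+1} = 0]. -/
open MeasureTheory Finset

/-- The expected value of the total payout to the `n` participants equals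
`(1+R) · (Σ_{j=1}^{n+1} π_j) · P[I_{n+1}=0]`. -/
theorem tontine_expected_total_participant_payout
    {Ω : Type*} [MeasurableSpace Ω] (P : Measure Ω) [IsProbabilityMeasure P]
    (n : ℕ) (hn : 1 ≤ n)
    (I : Fin n → Ω → ℝ) (hI01 : ∀ j ω, I j ω = 0 ∨ I j ω = 1)
    (hImeas : ∀ j, Measurable (I j))
    (Iadm : Ω → ℝ) (hIadm : ∀ ω, Iadm ω = ∏ j, (1 - I j ω))
    (hadm0 : 0 < P {ω | Iadm ω = 1}) (hadm1 : P {ω | Iadm ω = 1} < 1)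
    (π : Fin n → ℝ) (hπ : ∀ j, 0 < π j) (πadm : ℝ) (hπadm : 0 ≤ πadm)
    (f : Fin n → ℝ) (hf : ∀ j, 0 < f j) (fadm : ℝ) (hfadm : 0 < fadm)
    (R : ℝ) (hR : 0 ≤ R)
    (W : Fin n → Ω → ℝ)
    (hW : ∀ i ω, W i ω =
      (1 + R) * ((∑ j, π j) + πadm) * (f i * I i ω) /
        ((∑ j, f j * I j ω) + fadm * Iadm ω)) :
    ∫ ω, (∑ j, W j ω) ∂P =
      (1 + R) * ((∑ j, π j) + πadm) * (P {ω | Iadm ω = 0}).toReal := by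
  set c : ℝ := (1 + R) * ((∑ j, π j) + πadm) with hc
  have hIadmMeas : Measurable Iadm := by
    have : Iadm = fun ω => ∏ j, (1 - I j ω) := funext hIadm
    rw [this]
    exact Finset.measurable_prod _ fun j _ => measurable_const.sub (hImeas j)
  have hset : MeasurableSet {ω | Iadm ω = 0} := hIadmMeas (measurableSet_singleton 0)
  have key : ∀ ω, (∑ j, W j ω) = Set.indicator {ω | Iadm ω = 0} (fun _ => c) ω := by
    intro ω
    by_cases hz : ∀ j, I j ω = 0
    · have h1 : Iadm ω = 1 := by
        rw [hIadm]
        simp [hz]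
      have hnot : ω ∉ {ω | Iadm ω = 0} := by simp [Set.mem_setOf_eq, h1]
      rw [Set.indicator_of_notMem hnot]
      apply Finset.sum_eq_zero
      intro j _
      rw [hW, hz j]
      simp
    · push_neg at hz
      obtain ⟨j0, hj0⟩ := hz
      have hj1 : I j0 ω = 1 := (hI01 j0 ω).resolve_left hj0
      have h0 : Iadm ω = 0 := by
        rw [hIadm]
        exact Finset.prod_eq_zero (Finset.mem_univ j0) (by rw [hj1]; ring)
      have hmem : ω ∈ {ω | Iadm ω = 0} := h0
      rw [Set.indicator_of_mem hmem]
      set S : ℝ := ∑ j, f j * I j ω with hS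
      have hSpos : 0 < S := by
        apply Finset.sum_pos'
        · intro j _
          rcases hI01 j ω with h | h
          · simp [h]
          · simp [h]; exact (hf j).le
        · exact ⟨j0, Finset.mem_univ j0, by rw [hj1, mul_one]; exact hf j0⟩
      have hden : S + fadm * Iadm ω = S := by rw [h0]; ring
      have hsum : (∑ j, W j ω) = (c / S) * S := by
        rw [hS, Finset.mul_sum]
        apply Finset.sum_congr rfl
        intro j _
        rw [hW, hden]
        field_simp
        rw [← hS, mul_div_assoc, div_self hSpos.ne', mul_one]
      rw [hsum, div_mul_cancel₀ _ hSpos.ne']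
  have : (fun ω => ∑ j, W j ω) = Set.indicator {ω | Iadm ω = 0} (fun _ => c) := funext key
  rw [this, MeasureTheory.integral_indicator_const c hset, smul_eq_mul, mul_comm]
  rfl
end

section
/- If the administrator invests nothing, π_{n+1} = 0, then Σ_{j=1}^{n} E[W_j] = (1+R)·(Σ_{j=1}^{n} π_j)·P[I_{n+1} = 0] < (1+R)·Σ_{j=1}^{n} π_j; consequently the tontine fund cannot be actuarially fair for every participant, and there exists at least one participant i with E[W_i] < π_i·(1+R). -/
open MeasureTheory Finset

/-- If the administrator invests nothing (`π_{n+1} = 0`), then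
`Σ_{j=1}^n E[W_j] = (1+R)·(Σ_{j=1}^n π_j)·P[I_{n+1}=0] < (1+R)·Σ_{j=1}^n π_j`;
consequently the fund cannot be actuarially fair for every participant, and there is at
least one participant `i` with `E[W_i] < π_i·(1+R)`. -/
theorem tontine_zero_administrator_investment_unfair
    {Ω : Type*} [MeasurableSpace Ω] (P : Measure Ω) [IsProbabilityMeasure P]
    (n : ℕ) (hn : 1 ≤ n)
    (I : Fin n → Ω → ℝ) (hI01 : ∀ j ω, I j ω = 0 ∨ I j ω = 1)
    (hImeas : ∀ j, Measurable (I j))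
    (Iadm : Ω → ℝ) (hIadm : ∀ ω, Iadm ω = ∏ j, (1 - I j ω))
    (hadm0 : 0 < P {ω | Iadm ω = 1}) (hadm1 : P {ω | Iadm ω = 1} < 1)
    (π : Fin n → ℝ) (hπ : ∀ j, 0 < π j) (πadm : ℝ) (hπadm : πadm = 0)
    (f : Fin n → ℝ) (hf : ∀ j, 0 < f j) (fadm : ℝ) (hfadm : 0 < fadm)
    (R : ℝ) (hR : 0 ≤ R)
    (W : Fin n → Ω → ℝ)
    (hW : ∀ i ω, W i ω =
      (1 + R) * ((∑ j, π j) + πadm) * (f i * I i ω) /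
        ((∑ j, f j * I j ω) + fadm * Iadm ω)) :
    (∑ j, ∫ ω, W j ω ∂P) =
      (1 + R) * (∑ j, π j) * (P {ω | Iadm ω = 0}).toReal ∧
    (∑ j, ∫ ω, W j ω ∂P) < (1 + R) * (∑ j, π j) ∧
    ¬ (∀ i, π i * (1 + R) = ∫ ω, W i ω ∂P) ∧
    ∃ i, ∫ ω, W i ω ∂P < π i * (1 + R) := by

  have hnE : Nonempty (Fin n) := ⟨⟨0, hn⟩⟩
  set S := ∑ j, π j with hS
  have hSpos : 0 < S := Finset.sum_pos (fun j _ => hπ j) Finset.univ_nonempty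
  have hcpos : 0 < (1 + R) * S := by positivity
  have hInn : ∀ j ω, 0 ≤ I j ω := by
    intro j ω; rcases hI01 j ω with h | h <;> rw [h] <;> norm_num
  have key : ∀ ω, (Iadm ω = 1 ∧ ∀ j, I j ω = 0) ∨ (Iadm ω = 0 ∧ ∃ j, I j ω = 1) := by
    intro ω
    by_cases h : ∀ j, I j ω = 0
    · left
      refine ⟨?_, h⟩
      rw [hIadm, Finset.prod_eq_one]
      intro j _; rw [h j]; ring
    · right
      push_neg at h
      obtain ⟨j, hj⟩ := h
      have hj1 : I j ω = 1 := (hI01 j ω).resolve_left hj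
      refine ⟨?_, ⟨j, hj1⟩⟩
      rw [hIadm]
      exact Finset.prod_eq_zero (Finset.mem_univ j) (by rw [hj1]; ring)
  have hIadm_nn : ∀ ω, 0 ≤ Iadm ω := by
    intro ω; rcases key ω with ⟨h, _⟩ | ⟨h, _⟩ <;> rw [h] <;> norm_num
  have hnum_nn : ∀ j ω, 0 ≤ f j * I j ω := fun j ω => mul_nonneg (hf j).le (hInn j ω)
  have hden_pos : ∀ ω, 0 < (∑ j, f j * I j ω) + fadm * Iadm ω := by
    intro ω
    rcases key ω with ⟨h1, h0⟩ | ⟨h0, j, hj⟩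
    · have hz : ∑ j, f j * I j ω = 0 :=
        Finset.sum_eq_zero (fun j _ => by rw [h0 j]; ring)
      rw [hz, h1]; simpa using hfadm
    · have hsum : 0 < ∑ k, f k * I k ω :=
        Finset.sum_pos' (fun k _ => hnum_nn k ω)
          ⟨j, Finset.mem_univ j, by rw [hj, mul_one]; exact hf j⟩
      rw [h0]
      nlinarith
  have hsumW : ∀ ω, ∑ j, W j ω = (1 + R) * S * (1 - Iadm ω) := by
    intro ω
    rcases key ω with ⟨h1, h0⟩ | ⟨h0, _⟩
    · rw [h1]
      simp only [sub_self, mul_zero]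
      refine Finset.sum_eq_zero fun j _ => ?_
      rw [hW, h0 j]; simp
    · have hD : (∑ j, f j * I j ω) + fadm * Iadm ω = ∑ j, f j * I j ω := by
        rw [h0]; ring
      have hDp : 0 < ∑ j, f j * I j ω := by
        have := hden_pos ω; rwa [hD] at this
      rw [h0]
      calc ∑ j, W j ω
          = ∑ j, (1 + R) * (S + πadm) * (f j * I j ω) / (∑ k, f k * I k ω) := by
            refine Finset.sum_congr rfl fun j _ => ?_
            rw [hW, hD]
        _ = (1 + R) * S * ((∑ j, f j * I j ω) / (∑ k, f k * I k ω)) := by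
            rw [hπadm, add_zero, ← Finset.sum_div, ← Finset.mul_sum, mul_div_assoc]
        _ = (1 + R) * S * (1 - 0) := by rw [div_self hDp.ne', sub_zero]
  have hIadm_meas : Measurable Iadm := by
    have h : Iadm = fun ω => ∏ j, (1 - I j ω) := funext hIadm
    rw [h]
    exact Finset.measurable_prod _ (fun j _ => measurable_const.sub (hImeas j))
  have hWm : ∀ j, Measurable (W j) := by
    intro j
    have h : W j = fun ω => (1 + R) * (S + πadm) * (f j * I j ω) /
        ((∑ k, f k * I k ω) + fadm * Iadm ω) := funext (hW j)
    rw [h]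
    exact (((hImeas j).const_mul (f j)).const_mul ((1 + R) * (S + πadm))).div
      ((Finset.measurable_sum _ fun k _ => (hImeas k).const_mul (f k)).add
        (hIadm_meas.const_mul fadm))
  have hWnn : ∀ j ω, 0 ≤ W j ω := by
    intro j ω
    rw [hW]
    apply div_nonneg _ (hden_pos ω).le
    apply mul_nonneg _ (hnum_nn j ω)
    rw [hπadm, add_zero]
    positivity
  have hWle : ∀ j ω, W j ω ≤ (1 + R) * S := by
    intro j ω
    rw [hW, hπadm, add_zero, div_le_iff₀ (hden_pos ω)]
    have h1 : f j * I j ω ≤ ∑ k, f k * I k ω :=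
      Finset.single_le_sum (fun k _ => hnum_nn k ω) (Finset.mem_univ j)
    have h2 : 0 ≤ fadm * Iadm ω := mul_nonneg hfadm.le (hIadm_nn ω)
    nlinarith
  have hWint : ∀ j, Integrable (W j) P := by
    intro j
    refine (integrable_const ((1 + R) * S)).mono' (hWm j).aestronglyMeasurable
      (ae_of_all _ fun ω => ?_)
    rw [Real.norm_eq_abs, abs_of_nonneg (hWnn j ω)]
    exact hWle j ω
  have hA : MeasurableSet {ω | Iadm ω = 0} := hIadm_meas (measurableSet_singleton 0)
  have hB : MeasurableSet {ω | Iadm ω = 1} := hIadm_meas (measurableSet_singleton 1)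
  have hInd : ∀ ω, (1 + R) * S * (1 - Iadm ω)
      = Set.indicator {ω | Iadm ω = 0} (fun _ => (1 + R) * S) ω := by
    intro ω
    rcases key ω with ⟨h1, _⟩ | ⟨h0, _⟩
    · rw [Set.indicator_of_notMem (by simp [Set.mem_setOf_eq, h1]), h1]; ring
    · have hm : ω ∈ {ω | Iadm ω = 0} := h0
      rw [Set.indicator_of_mem hm, h0]; ring
  have hEq : (∑ j, ∫ ω, W j ω ∂P)
      = (1 + R) * S * (P {ω | Iadm ω = 0}).toReal := by
    rw [← integral_finset_sum _ (fun j _ => hWint j)]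
    have h : (fun ω => ∑ j, W j ω)
        = Set.indicator {ω | Iadm ω = 0} (fun _ => (1 + R) * S) := by
      funext ω; rw [hsumW ω, hInd ω]
    rw [h, integral_indicator_const _ hA]
    simp [mul_comm]
    exact Or.inl rfl
  have hcompl : {ω | Iadm ω = 0} = {ω | Iadm ω = 1}ᶜ := by
    ext ω
    simp only [Set.mem_compl_iff, Set.mem_setOf_eq]
    rcases key ω with ⟨h, _⟩ | ⟨h, _⟩ <;> simp [h]
  have h1top : P {ω | Iadm ω = 1} ≠ ⊤ := measure_ne_top P _
  have hp : (P {ω | Iadm ω = 0}).toReal = 1 - (P {ω | Iadm ω = 1}).toReal := by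
    rw [hcompl, measure_compl hB h1top, measure_univ,
      ENNReal.toReal_sub_of_le prob_le_one ENNReal.one_ne_top, ENNReal.toReal_one]
  have hppos : 0 < (P {ω | Iadm ω = 1}).toReal := ENNReal.toReal_pos hadm0.ne' h1top
  have hplt : (P {ω | Iadm ω = 0}).toReal < 1 := by rw [hp]; linarith
  have hlt : (∑ j, ∫ ω, W j ω ∂P) < (1 + R) * S := by
    rw [hEq]
    nlinarith
  refine ⟨hEq, hlt, ?_, ?_⟩
  · intro hfair
    have h : (∑ j, ∫ ω, W j ω ∂P) = (1 + R) * S := by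
      rw [Finset.sum_congr rfl (fun j _ => (hfair j).symm), ← Finset.sum_mul, hS]
      ring
    linarith
  · by_contra h
    push_neg at h
    have h2 : (1 + R) * S ≤ ∑ j, ∫ ω, W j ω ∂P := by
      have := Finset.sum_le_sum (fun j (_ : j ∈ Finset.univ) => h j)
      calc (1 + R) * S = ∑ j, π j * (1 + R) := by rw [← Finset.sum_mul, hS]; ring
        _ ≤ _ := this
    linarith
end

section
/- (Theorem 5) Suppose the survival indicator vector (I_1, …, I_n) is exchangeable, the share allocation is uniform (f_1 = ⋯ = f_n = f > 0), and π_{n+1} > 0. Then the tontine fund is actuarially fair for each of its n participants if and only if all participants pay the same initial investment π_1 = ⋯ = π_n = π with π = (π_{n+1}/n) · P[I_{n+1} = 0] / P[I_{n+1} = 1]. -/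
open MeasureTheory Finset

/-- Theorem 5: if the survival indicator vector is exchangeable and the share allocation is
uniform, then the tontine fund is actuarially fair for each of its `n` participants if and
only if all participants pay the same initial investment
`π = (π_{n+1}/n) · P[I_{n+1}=0]/P[I_{n+1}=1]`. -/
theorem tontine_exchangeable_uniform_shares_fairness
    {Ω : Type*} [MeasurableSpace Ω] (P : Measure Ω) [IsProbabilityMeasure P]
    (n : ℕ) (hn : 1 ≤ n)
    (I : Fin n → Ω → ℝ) (hI01 : ∀ j ω, I j ω = 0 ∨ I j ω = 1)
    (hImeas : ∀ j, Measurable (I j))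
    (hexch : ∀ σ : Equiv.Perm (Fin n),
      Measure.map (fun ω => fun j => I (σ j) ω) P =
        Measure.map (fun ω => fun j => I j ω) P)
    (Iadm : Ω → ℝ) (hIadm : ∀ ω, Iadm ω = ∏ j, (1 - I j ω))
    (hadm0 : 0 < P {ω | Iadm ω = 1}) (hadm1 : P {ω | Iadm ω = 1} < 1)
    (π : Fin n → ℝ) (hπ : ∀ j, 0 < π j) (πadm : ℝ) (hπadm : 0 < πadm)
    (f : Fin n → ℝ) (hf : ∀ j, 0 < f j) (fadm : ℝ) (hfadm : 0 < fadm)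
    (fconst : ℝ) (hfconst : 0 < fconst) (hfuni : ∀ j, f j = fconst)
    (R : ℝ) (hR : 0 ≤ R)
    (W : Fin n → Ω → ℝ)
    (hW : ∀ i ω, W i ω =
      (1 + R) * ((∑ j, π j) + πadm) * (f i * I i ω) /
        ((∑ j, f j * I j ω) + fadm * Iadm ω)) :
    (∀ i, π i * (1 + R) = ∫ ω, W i ω ∂P) ↔
    (∀ i, π i = (πadm / n) *
      ((P {ω | Iadm ω = 0}).toReal / (P {ω | Iadm ω = 1}).toReal)) := by
  classical
  set S : Ω → ℝ := fun ω => ∑ j, I j ω with hSdef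
  have hSmeas : Measurable S := Finset.measurable_sum _ fun j _ => hImeas j
  have hSnonneg : ∀ ω, 0 ≤ S ω := fun ω =>
    Finset.sum_nonneg fun j _ => by rcases hI01 j ω with h | h <;> simp [h]
  have hIadm_meas : Measurable Iadm := by
    have : Iadm = fun ω => ∏ j, (1 - I j ω) := funext hIadm
    rw [this]
    exact Finset.measurable_prod _ fun j _ => (measurable_const.sub (hImeas j))
  have hIadm01 : ∀ ω, Iadm ω = 0 ∨ Iadm ω = 1 := by
    intro ω
    rw [hIadm]
    by_cases h : ∃ j, I j ω = 1
    · left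
      obtain ⟨j, hj⟩ := h
      exact Finset.prod_eq_zero (Finset.mem_univ j) (by rw [hj]; ring)
    · right
      push_neg at h
      refine Finset.prod_eq_one fun j _ => ?_
      rcases hI01 j ω with h' | h'
      · rw [h']; ring
      · exact absurd h' (h j)
  -- S = 0 ↔ Iadm = 1
  have hS0 : ∀ ω, S ω = 0 ↔ Iadm ω = 1 := by
    intro ω
    constructor
    · intro h
      have hall : ∀ j ∈ Finset.univ, I j ω = 0 := by
        intro j _
        have := (Finset.sum_eq_zero_iff_of_nonneg
          (fun j _ => by rcases hI01 j ω with h' | h' <;> simp [h'])).mp h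
        exact this j (Finset.mem_univ j)
      rw [hIadm]
      exact Finset.prod_eq_one fun j hj => by rw [hall j hj]; ring
    · intro h
      by_contra hne
      have hpos : S ω ≠ 0 := hne
      obtain ⟨j, -, hj⟩ := Finset.exists_ne_zero_of_sum_ne_zero hpos
      have hj1 : I j ω = 1 := by rcases hI01 j ω with h' | h' <;> [exact absurd h' hj; exact h']
      have : Iadm ω = 0 := by
        rw [hIadm]
        exact Finset.prod_eq_zero (Finset.mem_univ j) (by rw [hj1]; ring)
      rw [this] at h; norm_num at h
  -- probabilities
  set p0 : ℝ := (P {ω | Iadm ω = 0}).toReal with hp0def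
  set p1 : ℝ := (P {ω | Iadm ω = 1}).toReal with hp1def
  have hmeas1set : MeasurableSet {ω | Iadm ω = 1} := hIadm_meas (measurableSet_singleton 1)
  have hmeas0set : MeasurableSet {ω | Iadm ω = 0} := hIadm_meas (measurableSet_singleton 0)
  have hcompl : {ω | Iadm ω = 0} = {ω | Iadm ω = 1}ᶜ := by
    ext ω
    simp only [Set.mem_setOf_eq, Set.mem_compl_iff]
    rcases hIadm01 ω with h | h <;> simp [h]
  have hp_sum : p0 + p1 = 1 := by
    have h1 : P {ω | Iadm ω = 0} + P {ω | Iadm ω = 1} = 1 := by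
      rw [hcompl]
      rw [add_comm]
      rw [measure_add_measure_compl hmeas1set]
      exact measure_univ
    have := congrArg ENNReal.toReal h1
    rwa [ENNReal.toReal_add (measure_ne_top _ _) (measure_ne_top _ _), ENNReal.toReal_one] at this
  have hp1pos : 0 < p1 := ENNReal.toReal_pos hadm0.ne' (measure_ne_top _ _)
  have hp1lt : p1 < 1 := by
    rw [hp1def]
    have := (ENNReal.toReal_lt_toReal (measure_ne_top _ _) ENNReal.one_ne_top).mpr hadm1
    simpa using this
  have hp0pos : 0 < p0 := by linarith
  have hnpos : (0:ℝ) < n := by exact_mod_cast hn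
  -- integrability
  have hdivmeas : ∀ i, Measurable (fun ω => I i ω / S ω) := fun i => (hImeas i).div hSmeas
  have hbound : ∀ i ω, 0 ≤ I i ω / S ω ∧ I i ω / S ω ≤ 1 := by
    intro i ω
    rcases hI01 i ω with h | h
    · simp [h]
    · have hSge : 1 ≤ S ω := by
        have h2 : I i ω ≤ S ω := Finset.single_le_sum
          (f := fun j => I j ω)
          (fun j _ => by rcases hI01 j ω with h' | h' <;> simp [h']) (Finset.mem_univ i)
        linarith [h2, h.ge]
      constructor
      · exact div_nonneg (by rw [h]; norm_num) (hSnonneg ω)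
      · rw [h, div_le_one (by linarith)]; exact hSge
  have hint : ∀ i, Integrable (fun ω => I i ω / S ω) P := by
    intro i
    refine Integrable.mono' (integrable_const (1:ℝ)) (hdivmeas i).aestronglyMeasurable ?_
    refine Filter.Eventually.of_forall fun ω => ?_
    rw [Real.norm_eq_abs, abs_of_nonneg (hbound i ω).1]
    exact (hbound i ω).2
  -- exchangeability: E[I i / S] does not depend on i
  have hmeaspi : Measurable (fun ω => fun j => I j ω) :=
    measurable_pi_lambda _ fun j => hImeas j
  have hswap : ∀ i k : Fin n, (∫ ω, I i ω / S ω ∂P) = ∫ ω, I k ω / S ω ∂P := by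
    intro i k
    set g : (Fin n → ℝ) → ℝ := fun v => v k / ∑ j, v j with hg
    have hgmeas : Measurable g :=
      (measurable_pi_apply k).div (Finset.measurable_sum _ fun j _ => measurable_pi_apply j)
    set σ : Equiv.Perm (Fin n) := Equiv.swap i k with hσ
    have hmeaspiσ : Measurable (fun ω => fun j => I (σ j) ω) :=
      measurable_pi_lambda _ fun j => hImeas (σ j)
    have h1 : (∫ v, g v ∂(Measure.map (fun ω => fun j => I (σ j) ω) P)) =
        ∫ ω, I i ω / S ω ∂P := by
      rw [integral_map hmeaspiσ.aemeasurable hgmeas.aestronglyMeasurable]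
      congr 1
      ext ω
      have hσk : σ k = i := Equiv.swap_apply_right i k
      have hsum : (∑ j, I (σ j) ω) = S ω := Equiv.sum_comp σ (fun j => I j ω)
      simp only [g, hσk, hsum]
    have h2 : (∫ v, g v ∂(Measure.map (fun ω => fun j => I j ω) P)) =
        ∫ ω, I k ω / S ω ∂P := by
      rw [integral_map hmeaspi.aemeasurable hgmeas.aestronglyMeasurable]
    rw [← h1, hexch σ, h2]
  -- sum of the expectations is p0
  have hptsum : ∀ ω, (∑ i, I i ω / S ω) =
      Set.indicator {ω | Iadm ω = 0} (fun _ => (1:ℝ)) ω := by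
    intro ω
    rw [← Finset.sum_div]
    rcases hIadm01 ω with h | h
    · have hSne : S ω ≠ 0 := fun hS => by
        have := (hS0 ω).mp hS; rw [h] at this; norm_num at this
      rw [div_self hSne]
      rw [Set.indicator_of_mem (by exact h)]
    · have hSz : S ω = 0 := (hS0 ω).mpr h
      rw [hSz, div_zero]
      rw [Set.indicator_of_notMem (by simp only [Set.mem_setOf_eq]; rw [h]; norm_num)]
  have hsum_c : (∑ i, ∫ ω, I i ω / S ω ∂P) = p0 := by
    rw [← integral_finset_sum _ fun i _ => hint i]
    calc (∫ ω, ∑ i, I i ω / S ω ∂P)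
        = ∫ ω, Set.indicator {ω | Iadm ω = 0} (fun _ => (1:ℝ)) ω ∂P := by
          congr 1; ext ω; exact hptsum ω
      _ = p0 := by
          rw [integral_indicator_const _ hmeas0set]
          simp [hp0def, Measure.real]
  have hci : ∀ i, (∫ ω, I i ω / S ω ∂P) = p0 / n := by
    intro i
    have : (∑ k, ∫ ω, I k ω / S ω ∂P) = n * ∫ ω, I i ω / S ω ∂P := by
      rw [Finset.sum_congr rfl fun k _ => hswap k i]
      simp [Finset.sum_const, mul_comm]
    rw [this] at hsum_c
    field_simp
    linarith [hsum_c]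
  -- rewrite W
  set T : ℝ := (∑ j, π j) + πadm with hT
  have hWeq : ∀ i ω, W i ω = (1 + R) * T * (I i ω / S ω) := by
    intro i ω
    rw [hW i ω]
    have hfs : (∑ j, f j * I j ω) = fconst * S ω := by
      rw [Finset.mul_sum]
      exact Finset.sum_congr rfl fun j _ => by rw [hfuni j]
    rw [hfs, hfuni i]
    rcases eq_or_ne (S ω) 0 with hSz | hSne
    · have hIi : I i ω = 0 := by
        rcases hI01 i ω with h | h
        · exact h
        · exfalso
          have h2 : I i ω ≤ S ω := Finset.single_le_sum
            (f := fun j => I j ω)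
            (fun j _ => by rcases hI01 j ω with h' | h' <;> simp [h']) (Finset.mem_univ i)
          rw [h, hSz] at h2; linarith
      rw [hIi, hSz]
      simp
    · have hIadm0 : Iadm ω = 0 := by
        rcases hIadm01 ω with h | h
        · exact h
        · exact absurd ((hS0 ω).mpr h) hSne
      rw [hIadm0]
      field_simp
      ring
  have hEW : ∀ i, (∫ ω, W i ω ∂P) = (1 + R) * T * (p0 / n) := by
    intro i
    calc (∫ ω, W i ω ∂P) = ∫ ω, (1 + R) * T * (I i ω / S ω) ∂P := by
          congr 1; ext ω; exact hWeq i ω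
      _ = (1 + R) * T * ∫ ω, I i ω / S ω ∂P := integral_const_mul _ _
      _ = (1 + R) * T * (p0 / n) := by rw [hci i]
  have hRpos : (0:ℝ) < 1 + R := by linarith
  constructor
  · intro hfair
    have hπeq : ∀ i, π i = T * (p0 / n) := by
      intro i
      have := hfair i
      rw [hEW i] at this
      have h2 : π i * (1 + R) = (1 + R) * (T * (p0/n)) := by rw [this]; ring
      nlinarith [h2]
    intro i
    have hsumπ : (∑ j, π j) = n * (T * (p0 / n)) := by
      rw [Finset.sum_congr rfl fun j _ => hπeq j]
      simp [Finset.sum_const, mul_comm]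
    have hTval : T = n * (T * (p0 / n)) + πadm := by rw [hT, ← hsumπ]
    have hTeq : T * p1 = πadm := by
      have hn0 : (n:ℝ) ≠ 0 := ne_of_gt hnpos
      field_simp at hTval
      nlinarith [hTval, hp_sum]
    rw [hπeq i]
    have hT' : T = πadm / p1 := by
      field_simp at hTeq ⊢
      linarith [hTeq]
    rw [hT']
    rw [hp0def, hp1def]
    field_simp
  · intro hπval
    intro i
    rw [hEW i]
    have hK : π i = (πadm / n) * (p0 / p1) := hπval i
    have hsumπ : (∑ j, π j) = n * ((πadm / n) * (p0 / p1)) := by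
      rw [Finset.sum_congr rfl fun j _ => hπval j]
      simp [Finset.sum_const, mul_comm]
    have hp0eq : p0 = 1 - p1 := by linarith
    have hTval : T = πadm / p1 := by
      rw [hT, hsumπ]
      rw [eq_div_iff hp1pos.ne', hp0eq]
      have hn0 : (n:ℝ) ≠ 0 := ne_of_gt hnpos
      field_simp
      ring
    rw [hTval, hK]
    ring
end
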